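/- Let A be a real n×n matrix, B a real n×p matrix, u : ℝ → ℝᵖ continuous, M a real symmetric n×n matrix, μ ∈ ℝ with AᵀM + MA + μM negative semidefinite, a ∈ ℝⁿ, c ∈ ℝᵖ, b ∈ ℝ, z > 0, r ≥ 0, and 0 ≤ τ ≤ T. Suppose z² a aᵀ ⪯ M. Let x*, x̃ : ℝ → ℝⁿ be differentiable with x*′(t) = A x*(t) + B u(t) and x̃′(t) = A x̃(t) + B u(t) for all t, and suppose x̃(0) lies in the ellipsoid {v : (x*(0) − v)ᵀ M (x*(0) − v) ≤ r}. If for all t ∈ [τ, T] the nominal trajectory satisfies the robustly modified predicate aᵀ x*(t) + cᵀ u(t) < b − √r · e^{−μt/2} / z, then for all t ∈ [τ, T] the perturbed trajectory satisfies the original predicate aᵀ x̃(t) + cᵀ u(t) < b. -/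

import Mathlib

open Matrix

lemma quad_deriv {n : ℕ} (M : Matrix (Fin n) (Fin n) ℝ) (e : ℝ → Fin n → ℝ)
    (e' : Fin n → ℝ) (t : ℝ) (he : HasDerivAt e e' t) :
    HasDerivAt (fun s => e s ⬝ᵥ (M *ᵥ e s)) (e' ⬝ᵥ (M *ᵥ e t) + e t ⬝ᵥ (M *ᵥ e')) t := by
  have hc : ∀ i, HasDerivAt (fun s => e s i) (e' i) t := hasDerivAt_pi.mp he
  have h1 : ∀ i, HasDerivAt (fun s => ∑ j, M i j * e s j) (∑ j, M i j * e' j) t :=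
    fun i => HasDerivAt.fun_sum (fun j _ => (hc j).const_mul (M i j))
  have h2 : HasDerivAt (fun s => ∑ i, e s i * ∑ j, M i j * e s j)
      (∑ i, (e' i * (∑ j, M i j * e t j) + e t i * ∑ j, M i j * e' j)) t :=
    HasDerivAt.fun_sum (fun i _ => (hc i).mul (h1 i))
  simp only [dotProduct, mulVec, Finset.sum_add_distrib] at h2 ⊢
  exact h2

lemma quad_vecMulVec {n : ℕ} (a w : Fin n → ℝ) :
    w ⬝ᵥ (vecMulVec a a *ᵥ w) = (a ⬝ᵥ w) * (a ⬝ᵥ w) := by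
  simp only [dotProduct, mulVec, vecMulVec_apply, Finset.sum_mul, Finset.mul_sum]
  rw [Finset.sum_comm]
  apply Finset.sum_congr rfl
  intro i _
  apply Finset.sum_congr rfl
  intro j _
  ring

/-- Deterministic (noise-free) specialization of the paper's Theorem 1 for a single
'always' predicate: if the nominal trajectory satisfies the robustly modified predicate
on `[τ, T]`, then any trajectory starting in the ellipsoidal ball of radius `r` satisfies
the original predicate on `[τ, T]`. -/
theorem stmt6 {n p : ℕ} (A : Matrix (Fin n) (Fin n) ℝ) (B : Matrix (Fin n) (Fin p) ℝ)
    (u : ℝ → Fin p → ℝ) (hu : Continuous u)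
    (M : Matrix (Fin n) (Fin n) ℝ) (hM : M.IsSymm) (μ : ℝ)
    (hnsd : ∀ v : Fin n → ℝ, v ⬝ᵥ ((Aᵀ * M + M * A + μ • M) *ᵥ v) ≤ 0)
    (a : Fin n → ℝ) (c : Fin p → ℝ) (b : ℝ) (z : ℝ) (hz : 0 < z) (r : ℝ) (hr : 0 ≤ r)
    (τ T : ℝ) (hτ : 0 ≤ τ) (hτT : τ ≤ T)
    (hpsd : ∀ w : Fin n → ℝ, 0 ≤ w ⬝ᵥ ((M - z ^ 2 • vecMulVec a a) *ᵥ w))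
    (xs xp : ℝ → Fin n → ℝ)
    (hxs : ∀ t : ℝ, HasDerivAt xs (A *ᵥ xs t + B *ᵥ u t) t)
    (hxp : ∀ t : ℝ, HasDerivAt xp (A *ᵥ xp t + B *ᵥ u t) t)
    (hinit : xp 0 ∈ {v : Fin n → ℝ | (xs 0 - v) ⬝ᵥ (M *ᵥ (xs 0 - v)) ≤ r})
    (hnom : ∀ t ∈ Set.Icc τ T,
      a ⬝ᵥ xs t + c ⬝ᵥ u t < b - Real.sqrt r * Real.exp (-(μ * t) / 2) / z) :
    ∀ t ∈ Set.Icc τ T, a ⬝ᵥ xp t + c ⬝ᵥ u t < b := by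
  set e : ℝ → Fin n → ℝ := fun t => xs t - xp t with he_def
  have he : ∀ t, HasDerivAt e (A *ᵥ e t) t := by
    intro t
    have := (hxs t).sub (hxp t)
    have h2 : A *ᵥ e t = A *ᵥ xs t + B *ᵥ u t - (A *ᵥ xp t + B *ᵥ u t) := by
      simp [he_def, mulVec_sub, add_sub_add_right_eq_sub]
    rw [h2]
    exact this
  set V : ℝ → ℝ := fun t => e t ⬝ᵥ (M *ᵥ e t) with hV_def
  have hV : ∀ t, HasDerivAt V ((A *ᵥ e t) ⬝ᵥ (M *ᵥ e t) + e t ⬝ᵥ (M *ᵥ (A *ᵥ e t))) t :=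
    fun t => quad_deriv M e (A *ᵥ e t) t (he t)
  set g : ℝ → ℝ := fun t => Real.exp (μ * t) * V t with hg_def
  have hexp : ∀ t : ℝ, HasDerivAt (fun s => Real.exp (μ * s)) (Real.exp (μ * t) * μ) t := by
    intro t
    simpa using ((hasDerivAt_id t).const_mul μ).exp
  have hg : ∀ t, HasDerivAt g (Real.exp (μ * t) * μ * V t +
      Real.exp (μ * t) * ((A *ᵥ e t) ⬝ᵥ (M *ᵥ e t) + e t ⬝ᵥ (M *ᵥ (A *ᵥ e t)))) t :=
    fun t => (hexp t).mul (hV t)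
  have hkey : ∀ t, (A *ᵥ e t) ⬝ᵥ (M *ᵥ e t) + e t ⬝ᵥ (M *ᵥ (A *ᵥ e t)) + μ * V t
      = e t ⬝ᵥ ((Aᵀ * M + M * A + μ • M) *ᵥ e t) := by
    intro t
    have h1 : e t ⬝ᵥ (Aᵀ *ᵥ (M *ᵥ e t)) = (A *ᵥ e t) ⬝ᵥ (M *ᵥ e t) := by
      rw [dotProduct_mulVec, vecMul_transpose]
    simp only [add_mulVec, dotProduct_add, smul_mulVec, dotProduct_smul, smul_eq_mul,
      ← mulVec_mulVec, h1, hV_def]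
  have hg' : ∀ t, Real.exp (μ * t) * μ * V t +
      Real.exp (μ * t) * ((A *ᵥ e t) ⬝ᵥ (M *ᵥ e t) + e t ⬝ᵥ (M *ᵥ (A *ᵥ e t))) ≤ 0 := by
    intro t
    have h := hnsd (e t)
    rw [← hkey t] at h
    nlinarith [Real.exp_pos (μ * t)]
  have hant : Antitone g := by
    apply antitone_of_deriv_nonpos
    · exact fun t => (hg t).differentiableAt
    · intro t
      rw [(hg t).deriv]
      exact hg' t
  intro t ht
  have ht0 : 0 ≤ t := le_trans hτ ht.1
  have hgle : g t ≤ g 0 := hant ht0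
  have hV0 : V 0 ≤ r := hinit
  have hVt : Real.exp (μ * t) * V t ≤ r := by
    have : g 0 = V 0 := by simp [hg_def]
    calc g t ≤ g 0 := hgle
    _ = V 0 := this
    _ ≤ r := hV0
  -- bound on (a ⬝ᵥ e t)
  have hquad := hpsd (e t)
  rw [sub_mulVec, dotProduct_sub, smul_mulVec, dotProduct_smul, smul_eq_mul,
    quad_vecMulVec] at hquad
  set s : ℝ := a ⬝ᵥ e t with hs_def
  have hsq : z ^ 2 * (s * s) ≤ V t := by linarith
  have hVtle : V t ≤ r * Real.exp (-(μ * t)) := by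
    have hep : (0:ℝ) < Real.exp (μ * t) := Real.exp_pos _
    rw [Real.exp_neg, ← div_eq_mul_inv, le_div_iff₀ hep]
    linarith
  have hexp_half : Real.exp (-(μ * t)) = Real.exp (-(μ * t) / 2) ^ 2 := by
    rw [← Real.exp_nat_mul]
    congr 1
    push_cast
    ring
  have habs : z * |s| ≤ Real.sqrt r * Real.exp (-(μ * t) / 2) := by
    have h1 : (z * |s|) ^ 2 ≤ (Real.sqrt r * Real.exp (-(μ * t) / 2)) ^ 2 := by
      rw [mul_pow, mul_pow, Real.sq_sqrt hr, sq_abs, ← hexp_half]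
      nlinarith
    have h2 : 0 ≤ z * |s| := mul_nonneg hz.le (abs_nonneg _)
    have h3 : 0 ≤ Real.sqrt r * Real.exp (-(μ * t) / 2) :=
      mul_nonneg (Real.sqrt_nonneg _) (Real.exp_pos _).le
    nlinarith
  have hbound : |s| ≤ Real.sqrt r * Real.exp (-(μ * t) / 2) / z := by
    rw [le_div_iff₀ hz]
    linarith [habs]
  have hxpxs : a ⬝ᵥ xp t = a ⬝ᵥ xs t - s := by
    simp [hs_def, he_def, dotProduct_sub]
  have hnomt := hnom t ht
  have : -s ≤ |s| := neg_le_abs s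
  rw [hxpxs]
  linarith
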